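/- If Upd is a family of update functions on measure spaces satisfying P1 (every measure in Upd(X,B) assigns probability 1 to B) and P2 (representation independence under measurable surjections), and if for some probability measure Pr on a measure space M, some event B, and some event A with 0 < Pr(A|B) < 1, there exists Pr' in Upd(Pr,B) with Pr'(A) < Pr(A|B), then there also exists Pr'' in Upd(Pr,B) with Pr''(A) > Pr(A|B). -/

import Mathlib

open MeasureTheory ProbabilityTheory Set
open scoped Classical NNReal ENNReal

noncomputable section

/-- A family of update functions, one for each measure space. -/
abbrev UpdFamily : Type 1 :=
  ∀ (W : Type) [MeasurableSpace W],
    Set (ProbabilityMeasure W) → Set W → Set (ProbabilityMeasure W)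

/-- Base condition: `Upd(X,B) = ∅` whenever every measure in `X` gives `B` probability 0. -/
def UpdBase (U : UpdFamily) : Prop :=
  ∀ (W : Type) [MeasurableSpace W] (X : Set (ProbabilityMeasure W)) (B : Set W),
    (∀ μ ∈ X, μ B = 0) → U W X B = ∅

/-- The conditional probability `Pr(A|B) = Pr(A ∩ B)/Pr(B)`. -/
def condProb {W : Type} [MeasurableSpace W] (μ : ProbabilityMeasure W) (A B : Set W) : ℝ≥0 :=
  μ (A ∩ B) / μ B

/-- The conditional probability measure `Pr(·|B)` (defined when `Pr(B) > 0`). -/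
def condPM {W : Type} [MeasurableSpace W] (μ : ProbabilityMeasure W) (B : Set W) :
    ProbabilityMeasure W :=
  if h : (μ : Measure W) B ≠ 0 then
    ⟨(μ : Measure W)[|B], cond_isProbabilityMeasure h⟩
  else μ

/-- Pushforward of a probability measure along a measurable map (`f*`). -/
def pushPM {W W' : Type} [MeasurableSpace W] [MeasurableSpace W']
    {f : W → W'} (hf : Measurable f) (μ : ProbabilityMeasure W) : ProbabilityMeasure W' :=
  μ.map hf.aemeasurable

/-- P1: every measure in `Upd(X,B)` assigns probability 1 to `B`. -/
def P1 (U : UpdFamily) : Prop :=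
  ∀ (W : Type) [MeasurableSpace W] (X : Set (ProbabilityMeasure W)) (B : Set W),
    MeasurableSet B → ∀ μ ∈ U W X B, μ B = 1

/-- P2: representation independence under measurable surjections. -/
def P2 (U : UpdFamily) : Prop :=
  ∀ (W W' : Type) [MeasurableSpace W] [MeasurableSpace W'] (f : W → W')
    (hf : Measurable f), Function.Surjective f →
    ∀ (X : Set (ProbabilityMeasure W)) (B : Set W'), MeasurableSet B →
      U W' (pushPM hf '' X) B = pushPM hf '' (U W X (f ⁻¹' B))

/-- P3: compositionality of updating. -/
def P3 (U : UpdFamily) : Prop :=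
  ∀ (W : Type) [MeasurableSpace W] (X : Set (ProbabilityMeasure W)) (B C : Set W),
    MeasurableSet B → MeasurableSet C → U W (U W X B) C = U W X (B ∩ C)

/-- P4: trivial update on sure evidence. -/
def P4 (U : UpdFamily) : Prop :=
  ∀ (W : Type) [MeasurableSpace W] (X : Set (ProbabilityMeasure W)) (B : Set W),
    MeasurableSet B → (∀ μ ∈ X, μ B = 1) → U W X B = X

/-- P5: pointwise union decomposition. -/
def P5 (U : UpdFamily) : Prop :=
  ∀ (W : Type) [MeasurableSpace W] (X : Set (ProbabilityMeasure W)) (B : Set W),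
    MeasurableSet B → U W X B = ⋃ μ ∈ X, U W {μ} B

/-- P6': singleton inputs yield at most one output measure. -/
def P6' (U : UpdFamily) : Prop :=
  ∀ (W : Type) [MeasurableSpace W] (μ : ProbabilityMeasure W) (B : Set W),
    MeasurableSet B → (U W {μ} B).Subsingleton

/-- P6'': bounded amplification relative to conditioning. -/
def P6'' (U : UpdFamily) : Prop :=
  ∀ (W : Type) [MeasurableSpace W] (μ : ProbabilityMeasure W), ∃ c : ℝ≥0,
    ∀ (A B : Set W), MeasurableSet A → MeasurableSet B →
      ∀ ν ∈ U W {μ} B, ν A ≤ c * condProb μ A B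

/-- P6: either P6' or P6'' holds. -/
def P6 (U : UpdFamily) : Prop := P6' U ∨ P6'' U

/-- P7: some non-sure evidence yields a nonempty update. -/
def P7 (U : UpdFamily) : Prop :=
  ∃ (W : Type) (_ : MeasurableSpace W) (X : Set (ProbabilityMeasure W)) (B : Set W),
    MeasurableSet B ∧ (∀ μ ∈ X, μ B ≠ 1) ∧ U W X B ≠ ∅

/-- Conditioning: `Upd_cond(X,B) = {Pr(·|B) : Pr ∈ X, Pr(B) > 0}`. -/
def updCond {W : Type} [MeasurableSpace W] (X : Set (ProbabilityMeasure W)) (B : Set W) :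
    Set (ProbabilityMeasure W) :=
  {ν | ∃ μ ∈ X, 0 < μ B ∧ ν = condPM μ B}

/-- Constraining: `Upd_constrain(X,B) = {Pr ∈ X : Pr(B) = 1}`. -/
def updConstrain {W : Type} [MeasurableSpace W] (X : Set (ProbabilityMeasure W)) (B : Set W) :
    Set (ProbabilityMeasure W) := {μ ∈ X | μ B = 1}

end

section Helpers

lemma lemA (p : ℝ) {ε : ℝ} (hε : 0 < ε) : ∃ N : ℕ, 0 < N ∧ Int.fract ((N : ℝ) * p) < ε := by
  set M : ℕ := ⌊1/ε⌋₊ + 2 with hMdef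
  have hM2 : 2 ≤ M := by omega
  have hM0 : (0:ℝ) < M := by positivity
  have hMε : 1 / (M:ℝ) < ε := by
    rw [div_lt_iff₀ hM0]
    have h1 : 1/ε < (M:ℝ) := by
      have := Nat.lt_floor_add_one (1/ε)
      push_cast [hMdef]
      linarith
    calc (1:ℝ) = ε * (1/ε) := by field_simp
    _ < ε * M := by exact mul_lt_mul_of_pos_left h1 hε
  have hmaps : ∀ n ∈ Finset.range (M+1), (⌊Int.fract ((n:ℝ)*p) * M⌋₊) ∈ Finset.range M := by
    intro n _
    simp only [Finset.mem_range]
    rw [Nat.floor_lt (mul_nonneg (Int.fract_nonneg _) hM0.le)]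
    have := Int.fract_lt_one ((n:ℝ)*p)
    calc Int.fract ((n:ℝ)*p) * M < 1 * M := mul_lt_mul_of_pos_right this hM0
    _ = M := one_mul _
  obtain ⟨n₁, hn₁, n₂, hn₂, hne, heq⟩ :=
    Finset.exists_ne_map_eq_of_card_lt_of_maps_to (by simp) hmaps
  wlog hlt : n₁ < n₂ generalizing n₁ n₂
  · exact this n₂ hn₂ n₁ hn₁ (Ne.symm hne) heq.symm (by omega)
  set K : ℕ := n₂ - n₁ with hKdef
  have hK0 : 0 < K := by omega
  have hKcast : (K:ℝ) = (n₂:ℝ) - n₁ := by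
    rw [hKdef, Nat.cast_sub hlt.le]
  -- |d| < 1/M where d = fract(n₂ p) - fract(n₁ p)
  set d : ℝ := Int.fract ((n₂:ℝ)*p) - Int.fract ((n₁:ℝ)*p) with hddef
  have hdlt : |d| < 1 / M := by
    set u := Int.fract ((n₁:ℝ)*p) * M with hu
    set v := Int.fract ((n₂:ℝ)*p) * M with hv
    have hu0 : 0 ≤ u := mul_nonneg (Int.fract_nonneg _) hM0.le
    have hv0 : 0 ≤ v := mul_nonneg (Int.fract_nonneg _) hM0.le
    have h1 : ((⌊u⌋₊:ℝ)) ≤ u := Nat.floor_le hu0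
    have h2 : u < ⌊u⌋₊ + 1 := Nat.lt_floor_add_one u
    have h3 : ((⌊v⌋₊:ℝ)) ≤ v := Nat.floor_le hv0
    have h4 : v < ⌊v⌋₊ + 1 := Nat.lt_floor_add_one v
    have heq' : ((⌊u⌋₊:ℝ)) = ((⌊v⌋₊:ℝ)) := by exact_mod_cast congrArg Nat.cast heq
    have habs : |v - u| < 1 := by
      rw [abs_lt]; constructor <;> linarith
    have : |d| * M < 1 := by
      have : v - u = d * M := by rw [hu, hv, hddef]; ring
      calc |d| * M = |d * M| := by rw [abs_mul, abs_of_nonneg hM0.le]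
      _ = |v - u| := by rw [this]
      _ < 1 := habs
    rw [lt_div_iff₀ hM0]; linarith [this]
  -- fract (K p) = fract d
  have hfracK : Int.fract ((K:ℝ)*p) = Int.fract d := by
    have : (K:ℝ)*p = d + ((⌊(n₂:ℝ)*p⌋ - ⌊(n₁:ℝ)*p⌋ : ℤ) : ℝ) := by
      have e2 := Int.floor_add_fract ((n₂:ℝ)*p)
      have e1 := Int.floor_add_fract ((n₁:ℝ)*p)
      push_cast
      rw [hKcast, hddef]
      linarith [e1, e2]
    rw [this, Int.fract_add_intCast]
  rcases le_or_gt 0 d with hd0 | hd0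
  · -- easy case
    refine ⟨K, hK0, ?_⟩
    rw [hfracK, Int.fract_eq_self.mpr ⟨hd0, by
      have := abs_lt.mp hdlt; calc d < 1/M := by linarith [this.2, le_abs_self d]
      _ < 1 := by rw [div_lt_one hM0]; exact_mod_cast by omega⟩]
    calc d ≤ |d| := le_abs_self d
    _ < 1/M := hdlt
    _ < ε := hMε
  · -- stepping case
    set θ := Int.fract ((K:ℝ)*p) with hθ
    have hθval : θ = d + 1 := by
      rw [hfracK]
      have h1 : Int.fract (d+1) = d + 1 := Int.fract_eq_self.mpr ⟨by
        have := abs_lt.mp hdlt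
        have : -(1/(M:ℝ)) < d := this.1
        have hM1 : 1/(M:ℝ) ≤ 1 := by
          rw [div_le_one hM0]; exact_mod_cast by omega
        linarith, by linarith⟩
      have h2 : Int.fract (d + 1) = Int.fract d := by
        have : d + 1 = d + ((1:ℤ):ℝ) := by push_cast; ring
        rw [this, Int.fract_add_intCast]
      rw [← h2, h1]
    set δ : ℝ := 1 - θ with hδdef
    have hδ0 : 0 < δ := by
      rw [hδdef, hθval]
      have := abs_lt.mp hdlt
      linarith [hd0]
    have hδM : δ < 1/M := by
      rw [hδdef, hθval]
      have := abs_lt.mp hdlt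
      linarith [this.1]
    set j : ℕ := ⌊1/δ⌋₊ with hjdef
    have hδ1 : δ < 1 := by
      calc δ < 1/M := hδM
      _ ≤ 1 := by rw [div_le_one hM0]; exact_mod_cast by omega
    have hj1 : 1 ≤ j := by
      rw [hjdef]
      apply Nat.le_floor
      rw [Nat.cast_one, le_div_iff₀ hδ0]
      linarith
    have hjδ : (j:ℝ) * δ ≤ 1 := by
      have := Nat.floor_le (by positivity : (0:ℝ) ≤ 1/δ)
      calc (j:ℝ) * δ ≤ (1/δ) * δ := by
            apply mul_le_mul_of_nonneg_right _ hδ0.le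
            rw [hjdef]; exact this
      _ = 1 := by field_simp
    have hj2 : 1 < ((j:ℝ)+1) * δ := by
      have := Nat.lt_floor_add_one (1/δ)
      calc (1:ℝ) = (1/δ) * δ := by field_simp
      _ < ((j:ℝ)+1)*δ := by
            apply mul_lt_mul_of_pos_right _ hδ0
            rw [hjdef] at *; exact_mod_cast this
    refine ⟨j * K, by positivity, ?_⟩
    have hNp : ((j*K : ℕ):ℝ) * p = (1 - (j:ℝ)*δ) + (((j:ℤ) * ⌊(K:ℝ)*p⌋ + j - 1 : ℤ) : ℝ) := by
      have e := Int.floor_add_fract ((K:ℝ)*p)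
      rw [← hθ] at e
      push_cast
      have : θ = 1 - δ := by rw [hδdef]; ring
      rw [this] at e
      nlinarith [e]
    rw [hNp, Int.fract_add_intCast]
    have hfr : Int.fract (1 - (j:ℝ)*δ) = 1 - (j:ℝ)*δ := by
      apply Int.fract_eq_self.mpr
      constructor
      · linarith
      · have : 0 < (j:ℝ)*δ := by
          apply mul_pos _ hδ0; exact_mod_cast hj1
        linarith
    rw [hfr]
    have : 1 - (j:ℝ)*δ < δ := by nlinarith [hj2]
    linarith [hδM, hMε]

def Iwrap (p c : ℝ) : Set ℝ := {x | x ∈ Set.Ico (0:ℝ) 1 ∧ Int.fract (x - c) < p}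

lemma Iwrap_subset (p c : ℝ) : Iwrap p c ⊆ Set.Ico 0 1 := fun _ h => h.1

lemma measurableSet_Iwrap (p c : ℝ) : MeasurableSet (Iwrap p c) := by
  have : Iwrap p c = Set.Ico 0 1 ∩ (fun x => Int.fract (x - c)) ⁻¹' (Set.Iio p) := by
    ext x; simp [Iwrap, and_comm]
  rw [this]
  exact measurableSet_Ico.inter
    ((measurable_fract.comp (measurable_id.sub_const c)) measurableSet_Iio)

lemma fract_sub_of_mem {x c : ℝ} (hx : x ∈ Set.Ico (0:ℝ) 1) (hc : c ∈ Set.Ico (0:ℝ) 1) :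
    Int.fract (x - c) = if c ≤ x then x - c else x - c + 1 := by
  obtain ⟨hx0, hx1⟩ := hx
  obtain ⟨hc0, hc1⟩ := hc
  split_ifs with h
  · exact Int.fract_eq_self.mpr ⟨by linarith, by linarith⟩
  · push_neg at h
    have h1 : x - c + 1 = (x - c) + ((1:ℤ):ℝ) := by push_cast; ring
    rw [← Int.fract_add_intCast (x - c) 1, ← h1]
    exact Int.fract_eq_self.mpr ⟨by linarith, by linarith⟩

lemma Iwrap_eq_of_le {p c : ℝ} (hc : c ∈ Set.Ico (0:ℝ) 1) (hp1 : p < 1) (h : c + p ≤ 1) :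
    Iwrap p c = Set.Ico c (c + p) := by
  obtain ⟨hc0, hc1⟩ := hc
  ext x
  simp only [Iwrap, mem_setOf_eq, mem_Ico]
  constructor
  · rintro ⟨⟨hx0, hx1⟩, hfr⟩
    rw [fract_sub_of_mem ⟨hx0, hx1⟩ ⟨hc0, hc1⟩] at hfr
    split_ifs at hfr with hcx
    · exact ⟨hcx, by linarith⟩
    · push_neg at hcx; exfalso; linarith
  · rintro ⟨h1, h2⟩
    have hx : x ∈ Set.Ico (0:ℝ) 1 := ⟨by linarith, by linarith⟩
    refine ⟨hx, ?_⟩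
    rw [fract_sub_of_mem hx ⟨hc0, hc1⟩, if_pos h1]
    linarith

lemma Iwrap_eq_of_gt {p c : ℝ} (hc : c ∈ Set.Ico (0:ℝ) 1) (hp1 : p < 1) (h : 1 < c + p) :
    Iwrap p c = Set.Ico 0 (c + p - 1) ∪ Set.Ico c 1 := by
  obtain ⟨hc0, hc1⟩ := hc
  ext x
  simp only [Iwrap, mem_setOf_eq, mem_Ico, mem_union]
  constructor
  · rintro ⟨⟨hx0, hx1⟩, hfr⟩
    rw [fract_sub_of_mem ⟨hx0, hx1⟩ ⟨hc0, hc1⟩] at hfr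
    split_ifs at hfr with hcx
    · exact Or.inr ⟨hcx, hx1⟩
    · push_neg at hcx; exact Or.inl ⟨hx0, by linarith⟩
  · rintro (⟨h1, h2⟩ | ⟨h1, h2⟩)
    · have hx : x ∈ Set.Ico (0:ℝ) 1 := ⟨h1, by linarith⟩
      refine ⟨hx, ?_⟩
      rw [fract_sub_of_mem hx ⟨hc0, hc1⟩, if_neg (by push_neg; linarith)]
      linarith
    · have hx : x ∈ Set.Ico (0:ℝ) 1 := ⟨by linarith, h2⟩
      refine ⟨hx, ?_⟩
      rw [fract_sub_of_mem hx ⟨hc0, hc1⟩, if_pos h1]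
      linarith

lemma volume_Iwrap {p c : ℝ} (hc : c ∈ Set.Ico (0:ℝ) 1) (hp0 : 0 ≤ p) (hp1 : p < 1) :
    volume (Iwrap p c) = ENNReal.ofReal p := by
  obtain ⟨hc0, hc1⟩ := hc
  rcases le_or_gt (c + p) 1 with h | h
  · rw [Iwrap_eq_of_le ⟨hc0, hc1⟩ hp1 h, Real.volume_Ico]
    congr 1; ring
  · rw [Iwrap_eq_of_gt ⟨hc0, hc1⟩ hp1 h]
    rw [measure_union _ measurableSet_Ico]
    · rw [Real.volume_Ico, Real.volume_Ico, ← ENNReal.ofReal_add (by linarith) (by linarith)]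
      congr 1; ring
    · apply Set.disjoint_left.mpr
      rintro x ⟨hx0, hx1⟩ ⟨hx2, hx3⟩
      linarith

lemma self_mem_Iwrap {p c : ℝ} (hc : c ∈ Set.Ico (0:ℝ) 1) (hp0 : 0 < p) : c ∈ Iwrap p c := by
  refine ⟨hc, ?_⟩
  simp [Int.fract_zero, hp0]

lemma exists_notMem_Iwrap {p c : ℝ} (hc : c ∈ Set.Ico (0:ℝ) 1) (hp0 : 0 < p) (hp1 : p < 1) :
    ∃ y, y ∈ Set.Ico (0:ℝ) 1 ∧ y ∉ Iwrap p c := by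
  obtain ⟨hc0, hc1⟩ := hc
  rcases lt_trichotomy (c + p) 1 with h | h | h
  · refine ⟨c + p, ⟨by linarith, h⟩, ?_⟩
    rw [Iwrap_eq_of_le ⟨hc0, hc1⟩ hp1 h.le]
    simp
  · refine ⟨0, ⟨le_refl _, by norm_num⟩, ?_⟩
    rw [Iwrap_eq_of_le ⟨hc0, hc1⟩ hp1 h.le]
    simp only [mem_Ico, not_and, not_lt]
    intro h'
    linarith
  · refine ⟨c + p - 1, ⟨by linarith, by linarith⟩, ?_⟩
    rw [Iwrap_eq_of_gt ⟨hc0, hc1⟩ hp1 h]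
    simp only [mem_union, mem_Ico, not_or, not_and, not_lt]
    constructor
    · intro _; linarith
    · intro h'; linarith


lemma volume_Ico_diff_Iwrap {p c : ℝ} (hc : c ∈ Set.Ico (0:ℝ) 1) (hp0 : 0 ≤ p) (hp1 : p < 1) :
    volume (Set.Ico (0:ℝ) 1 \ Iwrap p c) = 1 - ENNReal.ofReal p := by
  rw [measure_diff (Iwrap_subset p c) (measurableSet_Iwrap p c).nullMeasurableSet
      (by rw [volume_Iwrap hc hp0 hp1]; exact ENNReal.ofReal_ne_top),
    volume_Iwrap hc hp0 hp1, Real.volume_Ico]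
  norm_num

lemma mem_Iwrap_iff (p c x : ℝ) : x ∈ Iwrap p c ↔ x ∈ Set.Ico (0:ℝ) 1 ∧ Int.fract (x - c) < p :=
  Iff.rfl

lemma pushPM_toMeasure {W W' : Type} [MeasurableSpace W] [MeasurableSpace W']
    {f : W → W'} (hf : Measurable f) (μ : ProbabilityMeasure W) :
    (pushPM hf μ : Measure W') = (μ : Measure W).map f := by
  simp [pushPM]

lemma pushPM_apply_meas {W W' : Type} [MeasurableSpace W] [MeasurableSpace W']
    {f : W → W'} (hf : Measurable f) (μ : ProbabilityMeasure W) {s : Set W'}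
    (hs : MeasurableSet s) :
    (pushPM hf μ : Measure W') s = (μ : Measure W) (f ⁻¹' s) := by
  rw [pushPM_toMeasure, Measure.map_apply hf hs]

lemma pm_meas_one {W : Type} [MeasurableSpace W] {μ : ProbabilityMeasure W} {s : Set W}
    (h : μ s = 1) : (μ : Measure W) s = 1 := by
  rw [← ProbabilityMeasure.ennreal_coeFn_eq_coeFn_toMeasure, h, ENNReal.coe_one]

lemma meas_inter_of_one {W : Type} [MeasurableSpace W] (μ : Measure W) [IsProbabilityMeasure μ]
    {B : Set W} (hB : MeasurableSet B) (h : μ B = 1) (A : Set W) :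
    μ (A ∩ B) = μ A := by
  apply le_antisymm (measure_mono Set.inter_subset_left)
  have h1 : μ (A \ B) = 0 := by
    have hc : μ Bᶜ = 0 := by rw [prob_compl_eq_one_sub hB, h, tsub_self]
    exact measure_mono_null (fun x hx => hx.2) hc
  have h2' : μ A = μ (A ∩ B) := by
    rw [← measure_inter_add_diff A hB, h1, add_zero]
  exact le_of_eq h2'

lemma coverage {N : ℕ} (hN : 0 < N) {p : ℝ} (hp0 : 0 < p) (hp1 : p < 1) {x : ℝ}
    (hx : x ∈ Set.Ico (0:ℝ) 1) :
    ⌊p * N⌋₊ ≤ ((Finset.range N).filter (fun k : ℕ => x ∈ Iwrap p ((k:ℝ) / N))).card := by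
  classical
  obtain ⟨hx0, hx1⟩ := hx
  have hN0 : (0:ℝ) < N := by exact_mod_cast hN
  set m : ℕ := ⌊p * N⌋₊ with hmdef
  set a : ℕ := ⌊(N:ℝ) * x⌋₊ with hadef
  have hmR : (m:ℝ) ≤ p * N := Nat.floor_le (by positivity)
  have hmN : m < N := by
    rw [hmdef, Nat.floor_lt (by positivity)]
    calc p * N < 1 * N := by apply mul_lt_mul_of_pos_right hp1 hN0
    _ = N := one_mul _
  have haN : a < N := by
    rw [hadef, Nat.floor_lt (by positivity)]
    calc (N:ℝ) * x < N * 1 := by apply mul_lt_mul_of_pos_left hx1 hN0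
    _ = N := mul_one _
  set r : ℝ := (N:ℝ) * x - a with hrdef
  have hr0 : 0 ≤ r := by
    rw [hrdef]; have := Nat.floor_le (by positivity : (0:ℝ) ≤ (N:ℝ)*x); linarith
  have hr1 : r < 1 := by
    rw [hrdef]; have := Nat.lt_floor_add_one ((N:ℝ)*x); push_cast at this ⊢; linarith
  -- the injection
  set F : ℕ → ℕ := fun j => if j ≤ a then a - j else a + N - j with hF
  rw [show m = (Finset.range m).card from (Finset.card_range m).symm]
  apply Finset.card_le_card_of_injOn F
  · intro j hj
    rw [Finset.mem_coe, Finset.mem_range] at hj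
    have hjm : j < m := hj
    have hjR : (j:ℝ) ≤ (m:ℝ) - 1 := by
      have : (j:ℝ) + 1 ≤ m := by exact_mod_cast hjm
      linarith
    -- key real facts
    have hkey : ∀ kk : ℕ, ((kk:ℝ) = a - j ∨ (kk:ℝ) = (a:ℝ) + N - j) → kk < N →
        x ∈ Iwrap p ((kk:ℝ)/N) := by
      intro kk hcases hkN
      rw [mem_Iwrap_iff]
      refine ⟨⟨hx0, hx1⟩, ?_⟩
      have hfr1 : (0:ℝ) ≤ (r + j)/N := by positivity
      have hfr2 : (r + j)/N < p := by
        rw [div_lt_iff₀ hN0]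
        calc r + (j:ℝ) < 1 + ((m:ℝ) - 1) := by linarith
        _ = m := by ring
        _ ≤ p * N := hmR
      rcases hcases with hk | hk
      · have : x - (kk:ℝ)/N = (r + j)/N := by
          field_simp [hrdef, hk]
          rw [hk, hrdef]; ring
        rw [this, Int.fract_eq_self.mpr ⟨hfr1, by linarith⟩]
        exact hfr2
      · have : x - (kk:ℝ)/N = (r + j)/N + ((-1 : ℤ):ℝ) := by
          push_cast
          field_simp [hrdef, hk]
          rw [hk, hrdef]; ring
        rw [this, Int.fract_add_intCast, Int.fract_eq_self.mpr ⟨hfr1, by linarith⟩]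
        exact hfr2
    rw [Finset.mem_coe, Finset.mem_filter, Finset.mem_range]
    by_cases hja : j ≤ a
    · have h1 : F j = a - j := by rw [hF]; simp [hja]
      have h2 : F j < N := by omega
      refine ⟨h2, ?_⟩
      rw [h1]
      apply hkey (a - j) (Or.inl (by push_cast [Nat.cast_sub hja]; ring)) (by omega)
    · have h1 : F j = a + N - j := by rw [hF]; simp [hja]
      have h2 : F j < N := by omega
      refine ⟨h2, ?_⟩
      rw [h1]
      apply hkey (a + N - j) (Or.inr (by
        push_cast [Nat.cast_sub (by omega : j ≤ a + N)]; ring)) (by omega)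
  · intro j₁ hj₁ j₂ hj₂ hFeq
    simp only [Finset.coe_range, mem_Iio] at hj₁ hj₂
    rw [hF] at hFeq
    simp only at hFeq
    split_ifs at hFeq <;> omega

lemma lemB (ρ : Measure ℝ) [IsProbabilityMeasure ρ] {p : ℝ} (hp0 : 0 < p) (hp1 : p < 1)
    (hconf : ρ (Set.Ico 0 1) = 1)
    (hq : ρ (Iwrap p 0) < ENNReal.ofReal p) :
    ∃ c ∈ Set.Ico (0:ℝ) 1, ENNReal.ofReal p < ρ (Iwrap p c) := by
  classical
  by_contra hcon
  push_neg at hcon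
  set q : ℝ := (ρ (Iwrap p 0)).toReal with hqdef
  have hfin : ρ (Iwrap p 0) ≠ ⊤ := measure_ne_top _ _
  have hqlt : q < p := by
    have := ENNReal.toReal_lt_toReal hfin ENNReal.ofReal_ne_top |>.mpr hq
    rwa [ENNReal.toReal_ofReal hp0.le] at this
  obtain ⟨N, hN, hfr⟩ := lemA p (sub_pos.2 hqlt)
  obtain ⟨M, rfl⟩ : ∃ M, N = M + 1 := ⟨N - 1, by omega⟩
  set N := M + 1
  have hNR : (0:ℝ) < N := by positivity
  -- lower bound
  have hlow : (⌊p * (N:ℝ)⌋₊ : ℝ≥0∞) ≤ ∑ k ∈ Finset.range N, ρ (Iwrap p ((k:ℝ)/N)) := by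
    have hptwise : ∀ x : ℝ, (Set.Ico (0:ℝ) 1).indicator (fun _ => (⌊p * (N:ℝ)⌋₊ : ℝ≥0∞)) x ≤
        ∑ k ∈ Finset.range N, (Iwrap p ((k:ℝ)/N)).indicator (fun _ => (1:ℝ≥0∞)) x := by
      intro x
      by_cases hx : x ∈ Set.Ico (0:ℝ) 1
      · rw [indicator_of_mem hx]
        have hcov := coverage (by omega : 0 < N) hp0 hp1 hx
        calc (⌊p * (N:ℝ)⌋₊ : ℝ≥0∞)
            ≤ (((Finset.range N).filter (fun k : ℕ => x ∈ Iwrap p ((k:ℝ)/N))).card : ℝ≥0∞) := by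
              exact_mod_cast hcov
        _ = ∑ k ∈ (Finset.range N).filter (fun k : ℕ => x ∈ Iwrap p ((k:ℝ)/N)), (1:ℝ≥0∞) := by
              rw [Finset.sum_const, nsmul_eq_mul, mul_one]
        _ ≤ ∑ k ∈ Finset.range N, (Iwrap p ((k:ℝ)/N)).indicator (fun _ => (1:ℝ≥0∞)) x := by
              rw [Finset.sum_indicator_eq_sum_filter]
      · rw [indicator_of_notMem hx]
        exact zero_le'
    calc (⌊p * (N:ℝ)⌋₊ : ℝ≥0∞) = (⌊p * (N:ℝ)⌋₊ : ℝ≥0∞) * ρ (Set.Ico 0 1) := by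
          rw [hconf, mul_one]
    _ = ∫⁻ x, (Set.Ico (0:ℝ) 1).indicator (fun _ => (⌊p * (N:ℝ)⌋₊ : ℝ≥0∞)) x ∂ρ := by
          rw [lintegral_indicator_const measurableSet_Ico]
    _ ≤ ∫⁻ x, ∑ k ∈ Finset.range N, (Iwrap p ((k:ℝ)/N)).indicator (fun _ => (1:ℝ≥0∞)) x ∂ρ :=
          lintegral_mono hptwise
    _ = ∑ k ∈ Finset.range N, ∫⁻ x, (Iwrap p ((k:ℝ)/N)).indicator (fun _ => (1:ℝ≥0∞)) x ∂ρ := by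
          apply lintegral_finset_sum
          intro k _
          exact measurable_const.indicator (measurableSet_Iwrap _ _)
    _ = ∑ k ∈ Finset.range N, ρ (Iwrap p ((k:ℝ)/N)) := by
          apply Finset.sum_congr rfl
          intro k _
          rw [lintegral_indicator_const (measurableSet_Iwrap _ _), one_mul]
  -- upper bound
  have hup : ∑ k ∈ Finset.range N, ρ (Iwrap p ((k:ℝ)/N)) ≤
      ρ (Iwrap p 0) + (M:ℝ≥0∞) * ENNReal.ofReal p := by
    rw [Finset.sum_range_succ']
    have h0 : ((0:ℕ):ℝ)/(N:ℝ) = 0 := by norm_num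
    rw [h0]
    rw [add_comm]
    apply add_le_add le_rfl
    calc ∑ i ∈ Finset.range M, ρ (Iwrap p (((i+1:ℕ):ℝ)/N))
        ≤ ∑ i ∈ Finset.range M, ENNReal.ofReal p := by
          apply Finset.sum_le_sum
          intro i hi
          rw [Finset.mem_range] at hi
          apply hcon
          constructor
          · positivity
          · rw [div_lt_one hNR]
            exact_mod_cast by omega
    _ = (M:ℝ≥0∞) * ENNReal.ofReal p := by
          rw [Finset.sum_const, Finset.card_range, nsmul_eq_mul]
  have hkey : (⌊p * (N:ℝ)⌋₊ : ℝ≥0∞) ≤ ρ (Iwrap p 0) + (M:ℝ≥0∞) * ENNReal.ofReal p :=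
    le_trans hlow hup
  -- to real
  have hkeyR : ((⌊p * (N:ℝ)⌋₊ : ℕ):ℝ) ≤ q + M * p := by
    have hrhs_fin : ρ (Iwrap p 0) + (M:ℝ≥0∞) * ENNReal.ofReal p ≠ ⊤ := by
      apply ENNReal.add_ne_top.mpr
      exact ⟨hfin, ENNReal.mul_ne_top (ENNReal.natCast_ne_top M) ENNReal.ofReal_ne_top⟩
    have := ENNReal.toReal_mono hrhs_fin hkey
    rw [ENNReal.toReal_add hfin
        (ENNReal.mul_ne_top (ENNReal.natCast_ne_top M) ENNReal.ofReal_ne_top),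
      ENNReal.toReal_mul, ENNReal.toReal_ofReal hp0.le] at this
    simpa using this
  -- floor manipulation
  have hfl : ((⌊p * (N:ℝ)⌋₊ : ℕ):ℝ) = (⌊(N:ℝ) * p⌋ : ℝ) := by
    have h0 : 0 ≤ ⌊(N:ℝ)*p⌋ := Int.floor_nonneg.mpr (by positivity)
    rw [mul_comm p, ← Int.floor_toNat ((N:ℝ)*p)]
    exact_mod_cast Int.toNat_of_nonneg h0
  have hfract : Int.fract ((N:ℝ) * p) = (N:ℝ)*p - ⌊(N:ℝ)*p⌋ := rfl
  have hNM : (N:ℝ) = M + 1 := by push_cast [N]; ring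
  rw [hfl] at hkeyR
  have : p - q ≤ Int.fract ((N:ℝ)*p) := by
    rw [hfract]
    have : (M:ℝ) * p = (N:ℝ)*p - p := by rw [hNM]; ring
    linarith [hkeyR, this]
  linarith

end Helpers

/-- if some `Pr' ∈ Upd(Pr,B)` has `Pr'(A) < Pr(A|B)` with `0 < Pr(A|B) < 1`,
then some `Pr'' ∈ Upd(Pr,B)` has `Pr''(A) > Pr(A|B)`. -/
theorem stmt0 (U : UpdFamily) (hbase : UpdBase U) (h1 : P1 U) (h2 : P2 U)
    (W : Type) [MeasurableSpace W] (Pr : ProbabilityMeasure W) (A B : Set W)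
    (hA : MeasurableSet A) (hB : MeasurableSet B)
    (hpos : 0 < condProb Pr A B) (hlt1 : condProb Pr A B < 1)
    (Pr' : ProbabilityMeasure W) (hPr' : Pr' ∈ U W {Pr} B)
    (hless : Pr' A < condProb Pr A B) :
    ∃ Pr'' ∈ U W {Pr} B, condProb Pr A B < Pr'' A := by
  classical
  set pN : ℝ≥0 := condProb Pr A B with hpNdef
  have hcond : pN = Pr (A ∩ B) / Pr B := rfl
  have hpN0 : pN ≠ 0 := hpos.ne'
  have hB0 : Pr B ≠ 0 := fun h => hpN0 (by rw [hcond, h, div_zero])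
  have hAB0 : Pr (A ∩ B) ≠ 0 := fun h => hpN0 (by rw [hcond, h, zero_div])
  have hBpos : 0 < Pr B := pos_iff_ne_zero.mpr hB0
  have hmulN : pN * Pr B = Pr (A ∩ B) := by rw [hcond, div_mul_cancel₀ _ hB0]
  have hpNle1 : pN < 1 := hlt1
  have hABltB : Pr (A ∩ B) < Pr B := by
    calc Pr (A ∩ B) = pN * Pr B := hmulN.symm
    _ < 1 * Pr B := mul_lt_mul_of_pos_right hpNle1 hBpos
    _ = Pr B := one_mul _
  set μP : Measure W := (Pr : Measure W) with hμPdef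
  have hμB : μP B = ((Pr B : ℝ≥0) : ℝ≥0∞) :=
    (ProbabilityMeasure.ennreal_coeFn_eq_coeFn_toMeasure Pr B).symm
  have hμAB : μP (A ∩ B) = ((Pr (A ∩ B) : ℝ≥0) : ℝ≥0∞) :=
    (ProbabilityMeasure.ennreal_coeFn_eq_coeFn_toMeasure Pr (A ∩ B)).symm
  set pR : ℝ := (pN : ℝ) with hpRdef
  have hpR0 : 0 < pR := hpos
  have hpR1 : pR < 1 := hpNle1
  have hofReal : ENNReal.ofReal pR = (pN : ℝ≥0∞) := ENNReal.ofReal_coe_nnreal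
  have hmulE : (pN : ℝ≥0∞) * μP B = μP (A ∩ B) := by
    rw [hμB, hμAB, ← ENNReal.coe_mul]
    exact_mod_cast hmulN
  have hABne : (A ∩ B).Nonempty := by
    apply nonempty_of_measure_ne_zero (μ := μP)
    rw [hμAB]
    exact ENNReal.coe_ne_zero.mpr hAB0
  have hBdiffA : B \ A = B \ (A ∩ B) := by ext w; simp only [Set.mem_diff, Set.mem_inter_iff]; tauto
  have hμBA : μP (B \ A) = μP B - μP (A ∩ B) := by
    rw [hBdiffA, measure_diff Set.inter_subset_right (hA.inter hB).nullMeasurableSet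
      (measure_ne_top _ _)]
  have hBAne : (B \ A).Nonempty := by
    apply nonempty_of_measure_ne_zero (μ := μP)
    rw [hμBA, hμB, hμAB]
    simp only [ne_eq, tsub_eq_zero_iff_le, not_le]
    exact_mod_cast hABltB
  -- the two cases
  by_cases hBc : Bᶜ.Nonempty
  · -- CASE 1 : W₀ = Fin 3
    set B₀ : Set (Fin 3) := {x | x ≠ 2} with hB₀def
    have hmeas3 : ∀ s : Set (Fin 3), MeasurableSet s := fun s => MeasurableSpace.measurableSet_top
    set f : W → Fin 3 := fun w => if w ∈ A ∩ B then 0 else if w ∈ B then 1 else 2 with hfdef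
    have hfm : Measurable f :=
      Measurable.ite (hA.inter hB) measurable_const
        (Measurable.ite hB measurable_const measurable_const)
    have hf0 : f ⁻¹' {0} = A ∩ B := by
      ext w
      simp only [hfdef, Set.mem_preimage, Set.mem_singleton_iff]
      split_ifs with h1 h2
      · exact iff_of_true rfl h1
      · exact iff_of_false (by decide) h1
      · exact iff_of_false (by decide) h1
    have hf1' : f ⁻¹' {1} = B \ A := by
      ext w
      simp only [hfdef, Set.mem_preimage, Set.mem_singleton_iff, Set.mem_diff]
      split_ifs with h1 h2
      · exact iff_of_false (by decide) (fun h => h.2 h1.1)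
      · exact iff_of_true rfl ⟨h2, fun hA' => h1 ⟨hA', h2⟩⟩
      · exact iff_of_false (by decide) (fun h => h2 h.1)
    have hf2' : f ⁻¹' {2} = Bᶜ := by
      ext w
      simp only [hfdef, Set.mem_preimage, Set.mem_singleton_iff, Set.mem_compl_iff]
      split_ifs with h1 h2
      · exact iff_of_false (by decide) (fun h => h h1.2)
      · exact iff_of_false (by decide) (fun h => h h2)
      · exact iff_of_true rfl h2
    have hfB : f ⁻¹' B₀ = B := by
      ext w
      simp only [hfdef, hB₀def, Set.mem_preimage, Set.mem_setOf_eq]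
      split_ifs with h1 h2
      · exact iff_of_true (by decide) h1.2
      · exact iff_of_true (by decide) h2
      · exact iff_of_false (by simp) h2
    have hfsurj : Function.Surjective f := by
      intro y
      fin_cases y
      · obtain ⟨w, hw⟩ := hABne
        refine ⟨w, ?_⟩
        simp only [hfdef]
        rw [if_pos hw]
        rfl
      · obtain ⟨w, hw⟩ := hBAne
        refine ⟨w, ?_⟩
        simp only [hfdef]
        rw [if_neg (fun h => hw.2 h.1), if_pos hw.1]
        rfl
      · obtain ⟨w, hw⟩ := hBc
        refine ⟨w, ?_⟩
        simp only [hfdef]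
        rw [if_neg (fun h => hw h.2), if_neg hw]
        rfl
    -- the measure on ℝ
    set lam : Measure ℝ := μP B • (volume.restrict (Set.Ico (0:ℝ) 1))
        + (1 - μP B) • Measure.dirac 2 with hlamdef
    have hlam_apply : ∀ s : Set ℝ, MeasurableSet s →
        lam s = μP B * volume (s ∩ Set.Ico 0 1) + (1 - μP B) * s.indicator 1 2 := by
      intro s hs
      rw [hlamdef]
      simp only [Measure.coe_add, Measure.coe_smul, Pi.add_apply, Pi.smul_apply, smul_eq_mul]
      rw [Measure.restrict_apply hs, Measure.dirac_apply' _ hs]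
    have hlam_prob : IsProbabilityMeasure lam := by
      constructor
      rw [hlam_apply _ MeasurableSet.univ]
      simp only [Set.univ_inter, Real.volume_Ico, Set.indicator_univ, Pi.one_apply, mul_one]
      rw [show (1:ℝ) - 0 = 1 by norm_num, ENNReal.ofReal_one, mul_one]
      exact add_tsub_cancel_of_le prob_le_one
    set Λ : ProbabilityMeasure ℝ := ⟨lam, hlam_prob⟩ with hΛdef
    set g : ℝ → ℝ → Fin 3 :=
      fun c x => if x ∈ Iwrap pR c then 0 else if x ∈ Set.Ico (0:ℝ) 1 then 1 else 2 with hgdef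
    have hgm : ∀ c, Measurable (g c) := fun c =>
      Measurable.ite (measurableSet_Iwrap pR c) measurable_const
        (Measurable.ite measurableSet_Ico measurable_const measurable_const)
    have hg0 : ∀ c, g c ⁻¹' {0} = Iwrap pR c := by
      intro c
      ext x
      simp only [hgdef, Set.mem_preimage, Set.mem_singleton_iff]
      split_ifs with h1 h2
      · exact iff_of_true rfl h1
      · exact iff_of_false (by decide) h1
      · exact iff_of_false (by decide) h1
    have hg1 : ∀ c, g c ⁻¹' {1} = Set.Ico 0 1 \ Iwrap pR c := by
      intro c
      ext x
      simp only [hgdef, Set.mem_preimage, Set.mem_singleton_iff, Set.mem_diff]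
      split_ifs with h1 h2
      · exact iff_of_false (by decide) (fun h => h.2 h1)
      · exact iff_of_true rfl ⟨h2, h1⟩
      · exact iff_of_false (by decide) (fun h => h2 h.1)
    have hg2 : ∀ c, g c ⁻¹' {2} = (Set.Ico (0:ℝ) 1)ᶜ := by
      intro c
      ext x
      simp only [hgdef, Set.mem_preimage, Set.mem_singleton_iff, Set.mem_compl_iff]
      split_ifs with h1 h2
      · exact iff_of_false (by decide) (fun h => h (Iwrap_subset pR c h1))
      · exact iff_of_false (by decide) (fun h => h h2)
      · exact iff_of_true rfl h2
    have hgB : ∀ c, g c ⁻¹' B₀ = Set.Ico 0 1 := by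
      intro c
      ext x
      simp only [hgdef, hB₀def, Set.mem_preimage, Set.mem_setOf_eq]
      split_ifs with h1 h2
      · exact iff_of_true (by decide) (Iwrap_subset pR c h1)
      · exact iff_of_true (by decide) h2
      · exact iff_of_false (by simp) h2
    have h2notIco : (2:ℝ) ∉ Set.Ico (0:ℝ) 1 := by norm_num
    have hgsurj : ∀ c ∈ Set.Ico (0:ℝ) 1, Function.Surjective (g c) := by
      intro c hc y
      fin_cases y
      · refine ⟨c, ?_⟩
        simp only [hgdef]
        rw [if_pos (self_mem_Iwrap hc hpR0)]
        rfl
      · obtain ⟨y, hy1, hy2⟩ := exists_notMem_Iwrap hc hpR0 hpR1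
        refine ⟨y, ?_⟩
        simp only [hgdef]
        rw [if_neg hy2, if_pos hy1]
        rfl
      · refine ⟨2, ?_⟩
        simp only [hgdef]
        rw [if_neg (fun h => h2notIco (Iwrap_subset pR c h)), if_neg h2notIco]
        rfl
    -- pushforward equality
    have hbEeq : ∀ c ∈ Set.Ico (0:ℝ) 1, pushPM (hgm c) Λ = pushPM hfm Pr := by
      intro c hc
      apply ProbabilityMeasure.toMeasure_injective
      apply Measure.ext_of_singleton
      intro i
      rw [pushPM_apply_meas _ _ (hmeas3 _), pushPM_apply_meas _ _ (hmeas3 _)]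
      have hΛlam : (Λ : Measure ℝ) = lam := rfl
      fin_cases i
      · show (Λ : Measure ℝ) (g c ⁻¹' {0}) = (Pr : Measure W) (f ⁻¹' {0})
        rw [hg0 c, hf0, hΛlam, hlam_apply _ (measurableSet_Iwrap _ _)]
        rw [Set.inter_eq_self_of_subset_left (Iwrap_subset _ _),
          volume_Iwrap hc hpR0.le hpR1,
          Set.indicator_of_notMem (fun h => h2notIco (Iwrap_subset pR c h)) _]
        rw [mul_zero, add_zero, hofReal, mul_comm, hmulE]
      · show (Λ : Measure ℝ) (g c ⁻¹' {1}) = (Pr : Measure W) (f ⁻¹' {1})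
        rw [hg1 c, hf1', hΛlam, hlam_apply _ (measurableSet_Ico.diff (measurableSet_Iwrap _ _))]
        rw [Set.inter_eq_self_of_subset_left Set.diff_subset,
          volume_Ico_diff_Iwrap hc hpR0.le hpR1,
          Set.indicator_of_notMem (fun h => h2notIco h.1) _]
        rw [mul_zero, add_zero, hμBA, hμB, hμAB, hofReal]
        rw [← ENNReal.coe_one, ← ENNReal.coe_sub, ← ENNReal.coe_sub, ← ENNReal.coe_mul]
        congr 1
        apply NNReal.coe_injective
        push_cast [NNReal.coe_sub hpNle1.le, NNReal.coe_sub hABltB.le]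
        have : (pN:ℝ) * (Pr B : ℝ) = (Pr (A ∩ B) : ℝ) := by exact_mod_cast hmulN
        ring_nf
        nlinarith [this]
      · show (Λ : Measure ℝ) (g c ⁻¹' {2}) = (Pr : Measure W) (f ⁻¹' {2})
        rw [hg2 c, hf2', hΛlam, hlam_apply _ measurableSet_Ico.compl]
        rw [Set.compl_inter_self, measure_empty, mul_zero, zero_add]
        rw [Set.indicator_of_mem (Set.mem_compl h2notIco), Pi.one_apply, mul_one]
        rw [prob_compl_eq_one_sub hB]
    -- the update chain
    have E1 := h2 W (Fin 3) f hfm hfsurj {Pr} B₀ (hmeas3 B₀)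
    rw [Set.image_singleton, hfB] at E1
    have E2 : ∀ c ∈ Set.Ico (0:ℝ) 1,
        pushPM (hgm c) '' (U ℝ {Λ} (Set.Ico 0 1)) = pushPM hfm '' (U W {Pr} B) := by
      intro c hc
      have hh := h2 ℝ (Fin 3) (g c) (hgm c) (hgsurj c hc) {Λ} B₀ (hmeas3 B₀)
      rw [Set.image_singleton, hgB c, hbEeq c hc] at hh
      exact hh.symm.trans E1
    have h0mem : (0:ℝ) ∈ Set.Ico (0:ℝ) 1 := by norm_num
    have hν₀ : pushPM hfm Pr' ∈ pushPM (hgm 0) '' (U ℝ {Λ} (Set.Ico 0 1)) := by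
      rw [E2 0 h0mem]
      exact Set.mem_image_of_mem _ hPr'
    obtain ⟨ρ, hρR, hρeq⟩ := hν₀
    have hPr'B : (Pr' : Measure W) B = 1 := pm_meas_one (h1 W {Pr} B hB Pr' hPr')
    have hPr'AB : (Pr' : Measure W) (A ∩ B) = (Pr' : Measure W) A :=
      meas_inter_of_one _ hB hPr'B A
    have hρI0 : (ρ : Measure ℝ) (Iwrap pR 0) = (Pr' : Measure W) A := by
      have hh := congrArg (fun ν : ProbabilityMeasure (Fin 3) => (ν : Measure (Fin 3)) {0}) hρeq
      try simp only at hh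
      rw [pushPM_apply_meas _ _ (hmeas3 _), pushPM_apply_meas _ _ (hmeas3 _), hg0, hf0] at hh
      rw [hh, hPr'AB]
    have hρconf : (ρ : Measure ℝ) (Set.Ico 0 1) = 1 :=
      pm_meas_one (h1 ℝ {Λ} (Set.Ico 0 1) measurableSet_Ico ρ hρR)
    have hρlt : (ρ : Measure ℝ) (Iwrap pR 0) < ENNReal.ofReal pR := by
      rw [hρI0, hofReal, ← ProbabilityMeasure.ennreal_coeFn_eq_coeFn_toMeasure Pr' A]
      exact_mod_cast hless
    obtain ⟨c, hc, hbig⟩ := lemB (ρ : Measure ℝ) hpR0 hpR1 hρconf hρlt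
    have hmem : pushPM (hgm c) ρ ∈ pushPM hfm '' (U W {Pr} B) := by
      rw [← E2 c hc]
      exact Set.mem_image_of_mem _ hρR
    obtain ⟨Pr'', hPr''U, hPr''eq⟩ := hmem
    refine ⟨Pr'', hPr''U, ?_⟩
    have hPr''B : (Pr'' : Measure W) B = 1 := pm_meas_one (h1 W {Pr} B hB Pr'' hPr''U)
    have hPr''A : (Pr'' : Measure W) A = (ρ : Measure ℝ) (Iwrap pR c) := by
      rw [← meas_inter_of_one _ hB hPr''B A]
      have hh := congrArg (fun ν : ProbabilityMeasure (Fin 3) => (ν : Measure (Fin 3)) {0}) hPr''eq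
      try simp only at hh
      rw [pushPM_apply_meas _ _ (hmeas3 _), pushPM_apply_meas _ _ (hmeas3 _), hg0, hf0] at hh
      exact hh
    have hfinal : (pN : ℝ≥0∞) < ((Pr'' A : ℝ≥0) : ℝ≥0∞) := by
      rw [ProbabilityMeasure.ennreal_coeFn_eq_coeFn_toMeasure Pr'' A, hPr''A, ← hofReal]
      exact hbig
    exact_mod_cast hfinal

  · -- CASE 2 : W₀ = Bool
    have hBuniv : B = Set.univ := by
      rw [Set.not_nonempty_iff_eq_empty] at hBc
      exact Set.compl_empty_iff.mp hBc
    have hPrB1 : Pr B = 1 := by rw [hBuniv]; exact Pr.coeFn_univ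
    have hpNA : pN = Pr A := by
      rw [hcond, hPrB1, div_one, hBuniv, Set.inter_univ]
    have hmeasB : ∀ s : Set Bool, MeasurableSet s := fun s => MeasurableSpace.measurableSet_top
    set f : W → Bool := fun w => if w ∈ A then true else false with hfdef
    have hfm : Measurable f := Measurable.ite hA measurable_const measurable_const
    have hft : f ⁻¹' {true} = A := by
      ext w
      simp only [hfdef, Set.mem_preimage, Set.mem_singleton_iff]
      split_ifs with hw1
      · exact iff_of_true rfl hw1
      · exact iff_of_false (by simp) hw1
    have hff : f ⁻¹' {false} = Aᶜ := by
      ext w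
      simp only [hfdef, Set.mem_preimage, Set.mem_singleton_iff, Set.mem_compl_iff]
      split_ifs with hw1
      · exact iff_of_false (by simp) (fun h => h hw1)
      · exact iff_of_true rfl hw1
    have hμA : μP A = (pN : ℝ≥0∞) := by
      rw [hpNA]
      exact (ProbabilityMeasure.ennreal_coeFn_eq_coeFn_toMeasure Pr A).symm
    have hAne : A.Nonempty := by
      obtain ⟨w, hw⟩ := hABne
      exact ⟨w, hw.1⟩
    have hAcne : Aᶜ.Nonempty := by
      apply nonempty_of_measure_ne_zero (μ := μP)
      rw [prob_compl_eq_one_sub hA, hμA]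
      simp only [ne_eq, tsub_eq_zero_iff_le, not_le]
      exact_mod_cast hpNle1
    have hfsurj : Function.Surjective f := by
      intro y
      cases y
      · obtain ⟨w, hw⟩ := hAcne
        exact ⟨w, by simp only [hfdef]; rw [if_neg hw]⟩
      · obtain ⟨w, hw⟩ := hAne
        exact ⟨w, by simp only [hfdef]; rw [if_pos hw]⟩
    set T : Type := ↥(Set.Ico (0:ℝ) 1) with hTdef
    set lam2 : Measure T := Measure.comap Subtype.val volume with hlam2def
    have hlam2_apply : ∀ s : Set ℝ, MeasurableSet s →
        lam2 (Subtype.val ⁻¹' s) = volume (s ∩ Set.Ico 0 1) := by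
      intro s hs
      rw [hlam2def, comap_subtype_coe_apply measurableSet_Ico,
        Subtype.image_preimage_coe, Set.inter_comm]
    have hlam2_prob : IsProbabilityMeasure lam2 := by
      constructor
      have huniv : (Set.univ : Set T) = Subtype.val ⁻¹' Set.univ := rfl
      rw [huniv, hlam2_apply _ MeasurableSet.univ, Set.univ_inter, Real.volume_Ico]
      norm_num
    set Λ₂ : ProbabilityMeasure T := ⟨lam2, hlam2_prob⟩ with hΛ₂def
    set g : ℝ → T → Bool := fun c x => if (x : ℝ) ∈ Iwrap pR c then true else false with hgdef
    have hgsetmeas : ∀ c, MeasurableSet {x : T | (x:ℝ) ∈ Iwrap pR c} :=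
      fun c => (measurableSet_Iwrap pR c).preimage measurable_subtype_coe
    have hgm : ∀ c, Measurable (g c) := fun c =>
      Measurable.ite (hgsetmeas c) measurable_const measurable_const
    have hgt : ∀ c, g c ⁻¹' {true} = Subtype.val ⁻¹' Iwrap pR c := by
      intro c; ext x
      simp only [hgdef, Set.mem_preimage, Set.mem_singleton_iff]
      split_ifs with hw1
      · exact iff_of_true rfl hw1
      · exact iff_of_false (by simp) hw1
    have hgf : ∀ c, g c ⁻¹' {false} = Subtype.val ⁻¹' (Iwrap pR c)ᶜ := by
      intro c; ext x
      simp only [hgdef, Set.mem_preimage, Set.mem_singleton_iff, Set.mem_compl_iff]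
      split_ifs with hw1
      · exact iff_of_false (by simp) (fun h => h hw1)
      · exact iff_of_true rfl hw1
    have hgsurj : ∀ c ∈ Set.Ico (0:ℝ) 1, Function.Surjective (g c) := by
      intro c hc y
      cases y
      · obtain ⟨y, hy1, hy2⟩ := exists_notMem_Iwrap hc hpR0 hpR1
        exact ⟨⟨y, hy1⟩, by simp only [hgdef]; rw [if_neg hy2]⟩
      · exact ⟨⟨c, hc⟩, by simp only [hgdef]; rw [if_pos (self_mem_Iwrap hc hpR0)]⟩
    have hbEeq : ∀ c ∈ Set.Ico (0:ℝ) 1, pushPM (hgm c) Λ₂ = pushPM hfm Pr := by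
      intro c hc
      apply ProbabilityMeasure.toMeasure_injective
      apply Measure.ext_of_singleton
      intro i
      rw [pushPM_apply_meas _ _ (hmeasB _), pushPM_apply_meas _ _ (hmeasB _)]
      have hΛlam : (Λ₂ : Measure T) = lam2 := rfl
      cases i
      · rw [hgf c, hff, hΛlam, hlam2_apply _ (measurableSet_Iwrap pR c).compl]
        rw [show (Iwrap pR c)ᶜ ∩ Set.Ico (0:ℝ) 1 = Set.Ico (0:ℝ) 1 \ Iwrap pR c by
          rw [Set.inter_comm, ← Set.diff_eq]]
        rw [volume_Ico_diff_Iwrap hc hpR0.le hpR1, prob_compl_eq_one_sub hA, hμA, hofReal]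
      · rw [hgt c, hft, hΛlam, hlam2_apply _ (measurableSet_Iwrap pR c),
          Set.inter_eq_self_of_subset_left (Iwrap_subset pR c),
          volume_Iwrap hc hpR0.le hpR1, hμA, hofReal]
    -- chain
    have E1 := h2 W Bool f hfm hfsurj {Pr} Set.univ (hmeasB _)
    rw [Set.image_singleton, Set.preimage_univ, ← hBuniv] at E1
    have E2 : ∀ c ∈ Set.Ico (0:ℝ) 1,
        pushPM (hgm c) '' (U T {Λ₂} Set.univ) = pushPM hfm '' (U W {Pr} B) := by
      intro c hc
      have hh := h2 T Bool (g c) (hgm c) (hgsurj c hc) {Λ₂} Set.univ (hmeasB _)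
      rw [Set.image_singleton, Set.preimage_univ, hbEeq c hc] at hh
      exact hh.symm.trans E1
    have h0mem : (0:ℝ) ∈ Set.Ico (0:ℝ) 1 := by norm_num
    have hν₀ : pushPM hfm Pr' ∈ pushPM (hgm 0) '' (U T {Λ₂} Set.univ) := by
      rw [E2 0 h0mem]
      exact Set.mem_image_of_mem _ hPr'
    obtain ⟨ρ, hρR, hρeq⟩ := hν₀
    set ρh : Measure ℝ := (ρ : Measure T).map Subtype.val with hρhdef
    haveI : IsProbabilityMeasure ρh :=
      Measure.isProbabilityMeasure_map measurable_subtype_coe.aemeasurable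
    have hρh_apply : ∀ s : Set ℝ, MeasurableSet s → ρh s = (ρ : Measure T) (Subtype.val ⁻¹' s) :=
      fun s hs => Measure.map_apply measurable_subtype_coe hs
    have hρconf : ρh (Set.Ico 0 1) = 1 := by
      rw [hρh_apply _ measurableSet_Ico]
      have huniv : (Subtype.val ⁻¹' Set.Ico (0:ℝ) 1 : Set T) = Set.univ := by
        ext x; simpa using x.2
      rw [huniv]
      exact measure_univ
    have hρI0 : ρh (Iwrap pR 0) = (Pr' : Measure W) A := by
      rw [hρh_apply _ (measurableSet_Iwrap pR 0)]
      have hh := congrArg (fun ν : ProbabilityMeasure Bool => (ν : Measure Bool) {true}) hρeq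
      try simp only at hh
      rw [pushPM_apply_meas _ _ (hmeasB _), pushPM_apply_meas _ _ (hmeasB _), hgt, hft] at hh
      exact hh
    have hρlt : ρh (Iwrap pR 0) < ENNReal.ofReal pR := by
      rw [hρI0, hofReal, ← ProbabilityMeasure.ennreal_coeFn_eq_coeFn_toMeasure Pr' A]
      exact_mod_cast hless
    obtain ⟨c, hc, hbig⟩ := lemB ρh hpR0 hpR1 hρconf hρlt
    have hmem : pushPM (hgm c) ρ ∈ pushPM hfm '' (U W {Pr} B) := by
      rw [← E2 c hc]
      exact Set.mem_image_of_mem _ hρR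
    obtain ⟨Pr'', hPr''U, hPr''eq⟩ := hmem
    refine ⟨Pr'', hPr''U, ?_⟩
    have hPr''A : (Pr'' : Measure W) A = ρh (Iwrap pR c) := by
      rw [hρh_apply _ (measurableSet_Iwrap pR c)]
      have hh := congrArg (fun ν : ProbabilityMeasure Bool => (ν : Measure Bool) {true}) hPr''eq
      try simp only at hh
      rw [pushPM_apply_meas _ _ (hmeasB _), pushPM_apply_meas _ _ (hmeasB _), hgt, hft] at hh
      exact hh
    have hfinal : (pN : ℝ≥0∞) < ((Pr'' A : ℝ≥0) : ℝ≥0∞) := by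
      rw [ProbabilityMeasure.ennreal_coeFn_eq_coeFn_toMeasure Pr'' A, hPr''A, ← hofReal]
      exact hbig
    exact_mod_cast hfinal
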